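/- Let (V, σ) be a pre-braided vector space with a braided character ε. Define face maps d_{n;i} : V^⊗n → V^⊗(n−1) by d_{n;i} = ε₁ ∘ (σ₁ ∘ σ₂ ∘ ⋯ ∘ σ_{i−1}) (moving the i-th strand leftmost and then applying ε to the first factor). Then these maps satisfy the presimplicial identities d_{n−1;i} ∘ d_{n;j} = d_{n−1;j−1} ∘ d_{n;i} for all 1 ≤ i < j ≤ n. -/

import Mathlib

open TensorProduct

universe u
variable {R V : Type u} [CommRing R] [AddCommGroup V] [Module R V]

/-- `σ ⊗ id` as an endomorphism of `V ⊗ (V ⊗ V)`. -/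
noncomputable def sigma1 (σ : V ⊗[R] V →ₗ[R] V ⊗[R] V) :
    V ⊗[R] (V ⊗[R] V) →ₗ[R] V ⊗[R] (V ⊗[R] V) :=
  (TensorProduct.assoc R V V V).toLinearMap ∘ₗ (LinearMap.rTensor V σ) ∘ₗ
    (TensorProduct.assoc R V V V).symm.toLinearMap

/-- `id ⊗ σ` as an endomorphism of `V ⊗ (V ⊗ V)`. -/
noncomputable def sigma2 (σ : V ⊗[R] V →ₗ[R] V ⊗[R] V) :
    V ⊗[R] (V ⊗[R] V) →ₗ[R] V ⊗[R] (V ⊗[R] V) :=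
  LinearMap.lTensor V σ

/-- The Yang–Baxter equation for `σ : V ⊗ V → V ⊗ V`. -/
def YangBaxter (σ : V ⊗[R] V →ₗ[R] V ⊗[R] V) : Prop :=
  sigma1 σ ∘ₗ sigma2 σ ∘ₗ sigma1 σ = sigma2 σ ∘ₗ sigma1 σ ∘ₗ sigma2 σ

variable (R V) in
/-- The iterated tensor power `V^{⊗n}` (left-nested: `TP 0 = R`, `TP (n+1) = V ⊗ TP n`),
bundled as an object of `ModuleCat R` so that the recursion carries its instances. -/
noncomputable def TPb : ℕ → ModuleCat.{u} R
  | 0 => ModuleCat.of R R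
  | n + 1 => ModuleCat.of R (V ⊗[R] (TPb n))

variable (R V) in
/-- The iterated tensor power `V^{⊗n}` as a type. -/
noncomputable abbrev TP (n : ℕ) : Type u := (TPb R V n : Type u)

/-- The lift `σᵢ = id^{⊗(i−1)} ⊗ σ ⊗ id^{⊗(n−i−1)}` of `σ` to `V^{⊗n}`, acting on the
tensor factors `i` and `i+1` (1-indexed); it is the identity for out-of-range `i`. -/
noncomputable def sig (σ : V ⊗[R] V →ₗ[R] V ⊗[R] V) :
    (n : ℕ) → (i : ℕ) → TP R V n →ₗ[R] TP R V n
  | 0, _ => LinearMap.id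
  | 1, _ => LinearMap.id
  | n+2, 0 => LinearMap.id
  | n+2, 1 =>
      (TensorProduct.assoc R V V (TP R V n)).toLinearMap ∘ₗ
        (LinearMap.rTensor (TP R V n) σ) ∘ₗ
        (TensorProduct.assoc R V V (TP R V n)).symm.toLinearMap
  | n+2, i+2 => LinearMap.lTensor V (sig σ (n+1) (i+1))

/-- The braid lift `T^σ_{p_{i,n}} = σ₁ ∘ σ₂ ∘ ⋯ ∘ σ_{i−1}` of the permutation `p_{i,n}`
moving the `i`-th strand to the leftmost position. -/
noncomputable def slide (σ : V ⊗[R] V →ₗ[R] V ⊗[R] V) (n : ℕ) :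
    (i : ℕ) → TP R V n →ₗ[R] TP R V n
  | 0 => LinearMap.id
  | 1 => LinearMap.id
  | i+2 => slide σ n (i+1) ∘ₗ sig σ n (i+1)

/-- `ε₁ = ε ⊗ id^{⊗n}` : applying `ε` to the first tensor factor of `V^{⊗(n+1)}`. -/
noncomputable def eps1 (ε : V →ₗ[R] R) (n : ℕ) : TP R V (n+1) →ₗ[R] TP R V n :=
  (TensorProduct.lid R (TP R V n)).toLinearMap ∘ₗ LinearMap.rTensor (TP R V n) ε

/-- The face map `d_{n+1;i} = ε₁ ∘ T^σ_{p_{i,n+1}} : V^{⊗(n+1)} → V^{⊗n}`. -/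
noncomputable def face (σ : V ⊗[R] V →ₗ[R] V ⊗[R] V) (ε : V →ₗ[R] R) (n : ℕ) (i : ℕ) :
    TP R V (n+1) →ₗ[R] TP R V n :=
  eps1 ε n ∘ₗ slide σ (n+1) i

/-- The braided differential `d_{n+1} = Σ_{i=1}^{n+1} (−1)^{i−1} ε₁ ∘ T^σ_{p_{i,n+1}}`. -/
noncomputable def dbr (σ : V ⊗[R] V →ₗ[R] V ⊗[R] V) (ε : V →ₗ[R] R) (n : ℕ) :
    TP R V (n+1) →ₗ[R] TP R V n :=
  ∑ i ∈ Finset.range (n+1), ((-1 : R)^i) • face σ ε n (i+1)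


section Generic
variable (σ : V ⊗[R] V →ₗ[R] V ⊗[R] V) (ε : V →ₗ[R] R)
variable (W W' : Type u) [AddCommGroup W] [Module R W] [AddCommGroup W'] [Module R W']

/-- `σ` acting on the first two factors of `V ⊗ (V ⊗ W)`. -/
noncomputable def S1g : V ⊗[R] (V ⊗[R] W) →ₗ[R] V ⊗[R] (V ⊗[R] W) :=
  (TensorProduct.assoc R V V W).toLinearMap ∘ₗ (LinearMap.rTensor W σ) ∘ₗ
    (TensorProduct.assoc R V V W).symm.toLinearMap

/-- `ε` applied to the first factor of `V ⊗ W`. -/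
noncomputable def Eg : V ⊗[R] W →ₗ[R] W :=
  (TensorProduct.lid R W).toLinearMap ∘ₗ LinearMap.rTensor W ε

variable {W W'}

lemma Eg_lTensor (f : W →ₗ[R] W') :
    Eg ε W' ∘ₗ LinearMap.lTensor V f = f ∘ₗ Eg ε W := by
  ext v w
  simp [Eg]

/-- The associator `V ⊗ (V ⊗ (V ⊗ W)) ≃ (V ⊗ (V ⊗ V)) ⊗ W`. -/
noncomputable def alph : V ⊗[R] (V ⊗[R] (V ⊗[R] W)) ≃ₗ[R] (V ⊗[R] (V ⊗[R] V)) ⊗[R] W :=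
  (LinearEquiv.lTensor V (TensorProduct.assoc R V V W).symm).trans
    (TensorProduct.assoc R V (V ⊗[R] V) W).symm

lemma A1 : S1g σ (V ⊗[R] W) =
    (alph (R:=R) (V:=V) (W:=W)).symm.toLinearMap ∘ₗ LinearMap.rTensor W (sigma1 σ) ∘ₗ
      (alph (R:=R) (V:=V) (W:=W)).toLinearMap := by
  ext v w u x
  simp only [LinearMap.coe_comp, Function.comp_apply, LinearEquiv.coe_coe,
    AlgebraTensorModule.curry_apply, curry_apply, LinearMap.coe_restrictScalars,
    S1g, alph, sigma1, LinearEquiv.trans_apply, LinearEquiv.lTensor_tmul,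
    assoc_symm_tmul, LinearMap.rTensor_tmul, assoc_tmul, LinearEquiv.trans_symm,
    LinearEquiv.symm_symm, LinearEquiv.lTensor_symm_tmul]
  generalize σ (v ⊗ₜ[R] w) = p
  induction p using TensorProduct.induction_on with
  | zero => simp
  | tmul a b => simp [alph]
  | add p q hp hq => simp only [add_tmul, map_add, hp, hq]

lemma A2 : LinearMap.lTensor V (S1g σ W) =
    (alph (R:=R) (V:=V) (W:=W)).symm.toLinearMap ∘ₗ LinearMap.rTensor W (sigma2 σ) ∘ₗ
      (alph (R:=R) (V:=V) (W:=W)).toLinearMap := by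
  ext v w u x
  simp only [LinearMap.coe_comp, Function.comp_apply, LinearEquiv.coe_coe,
    AlgebraTensorModule.curry_apply, curry_apply, LinearMap.coe_restrictScalars,
    S1g, alph, sigma2, LinearEquiv.trans_apply, LinearEquiv.lTensor_tmul,
    assoc_symm_tmul, LinearMap.rTensor_tmul, LinearMap.lTensor_tmul, assoc_tmul,
    LinearEquiv.trans_symm, LinearEquiv.symm_symm, LinearEquiv.lTensor_symm_tmul]

/-- Yang–Baxter on `V ⊗ (V ⊗ (V ⊗ W))`. -/
lemma G1 (hσ : YangBaxter σ) :
    S1g σ (V ⊗[R] W) ∘ₗ LinearMap.lTensor V (S1g σ W) ∘ₗ S1g σ (V ⊗[R] W)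
      = LinearMap.lTensor V (S1g σ W) ∘ₗ S1g σ (V ⊗[R] W) ∘ₗ LinearMap.lTensor V (S1g σ W) := by
  have hσ' : sigma1 σ ∘ₗ sigma2 σ ∘ₗ sigma1 σ = sigma2 σ ∘ₗ sigma1 σ ∘ₗ sigma2 σ := hσ
  have a1 : ∀ x, S1g σ (V ⊗[R] W) x
      = (alph (R:=R) (V:=V) (W:=W)).symm (LinearMap.rTensor W (sigma1 σ) (alph (R:=R) (V:=V) (W:=W) x)) := by
    intro x
    have h := congrArg (fun f => f x) (A1 σ (W := W))
    simpa using h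
  have a2 : ∀ x, LinearMap.lTensor V (S1g σ W) x
      = (alph (R:=R) (V:=V) (W:=W)).symm (LinearMap.rTensor W (sigma2 σ) (alph (R:=R) (V:=V) (W:=W) x)) := by
    intro x
    have h := congrArg (fun f => f x) (A2 σ (W := W))
    simpa using h
  have key : ∀ y, LinearMap.rTensor W (sigma1 σ) (LinearMap.rTensor W (sigma2 σ)
        (LinearMap.rTensor W (sigma1 σ) y))
      = LinearMap.rTensor W (sigma2 σ) (LinearMap.rTensor W (sigma1 σ)
        (LinearMap.rTensor W (sigma2 σ) y)) := by
    intro y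
    have h := congrArg (fun f => LinearMap.rTensor W f y) hσ'
    simpa [LinearMap.rTensor_comp] using h
  refine LinearMap.ext fun t => ?_
  simp only [LinearMap.coe_comp, Function.comp_apply]
  rw [a1, a2, a1, a2, a1, a2]
  simp only [LinearEquiv.apply_symm_apply]
  exact congrArg _ (key _)

/-- `S1g` commutes with maps acting on the third-and-beyond factors. -/
lemma G2 (g : W →ₗ[R] W) :
    S1g σ W ∘ₗ LinearMap.lTensor V (LinearMap.lTensor V g)
      = LinearMap.lTensor V (LinearMap.lTensor V g) ∘ₗ S1g σ W := by
  ext v w x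
  simp only [LinearMap.coe_comp, Function.comp_apply, LinearEquiv.coe_coe,
    AlgebraTensorModule.curry_apply, curry_apply, LinearMap.coe_restrictScalars,
    S1g, LinearMap.lTensor_tmul, assoc_symm_tmul, LinearMap.rTensor_tmul, assoc_tmul]
  generalize σ (v ⊗ₜ[R] w) = p
  induction p using TensorProduct.induction_on with
  | zero => simp
  | tmul a b => simp
  | add p q hp hq => simp only [add_tmul, map_add, hp, hq]

lemma EgEg_assoc (p : V ⊗[R] V) (x : W) :
    Eg ε W (Eg ε (V ⊗[R] W) ((TensorProduct.assoc R V V W) (p ⊗ₜ[R] x)))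
      = ((TensorProduct.lid R R) (TensorProduct.map ε ε p)) • x := by
  induction p using TensorProduct.induction_on with
  | zero => simp
  | tmul a b => simp [Eg, mul_smul]
  | add p q hp hq => simp only [add_tmul, map_add, hp, hq, LinearEquiv.map_add, add_smul]

lemma EgEg_S1
    (hε : ((TensorProduct.lid R R).toLinearMap ∘ₗ TensorProduct.map ε ε) ∘ₗ σ =
          (TensorProduct.lid R R).toLinearMap ∘ₗ TensorProduct.map ε ε) :
    Eg ε W ∘ₗ Eg ε (V ⊗[R] W) ∘ₗ S1g σ W = Eg ε W ∘ₗ Eg ε (V ⊗[R] W) := by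
  have hε' : ∀ q : V ⊗[R] V,
      (TensorProduct.lid R R) (TensorProduct.map ε ε (σ q))
        = (TensorProduct.lid R R) (TensorProduct.map ε ε q) := fun q =>
    congrArg (fun f => f q) hε
  ext v w x
  simp only [LinearMap.coe_comp, Function.comp_apply, LinearEquiv.coe_coe,
    AlgebraTensorModule.curry_apply, curry_apply, LinearMap.coe_restrictScalars,
    S1g, assoc_symm_tmul, LinearMap.rTensor_tmul]
  rw [EgEg_assoc, hε']
  simp [Eg, mul_smul]

end Generic

section TPlem
variable (σ : V ⊗[R] V →ₗ[R] V ⊗[R] V) (ε : V →ₗ[R] R)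

lemma sig_one (n : ℕ) : sig σ (n+2) 1 = S1g σ (TP R V n) := rfl
lemma sig_succ (n i : ℕ) : sig σ (n+2) (i+2) = LinearMap.lTensor V (sig σ (n+1) (i+1)) := rfl
lemma sig_two (n : ℕ) : sig σ (n+3) 2 = LinearMap.lTensor V (S1g σ (TP R V n)) := rfl
lemma sig_one' (n : ℕ) : sig σ (n+3) 1 = S1g σ (V ⊗[R] TP R V n) := rfl
lemma eps1_eq (n : ℕ) : eps1 ε n = Eg ε (TP R V n) := rfl
lemma eps1_eq' (n : ℕ) : eps1 ε (n+1) = Eg ε (V ⊗[R] TP R V n) := rfl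
lemma slide_succ (n i : ℕ) : slide σ n (i+2) = slide σ n (i+1) ∘ₗ sig σ n (i+1) := rfl
lemma face_succ (n i : ℕ) : face σ ε n (i+2) = face σ ε n (i+1) ∘ₗ sig σ (n+1) (i+1) := rfl

/-- Yang–Baxter for the lifted maps. -/
lemma ybTP (hσ : YangBaxter σ) : ∀ (n i : ℕ), 1 ≤ i → i + 2 ≤ n →
    sig σ n i ∘ₗ sig σ n (i+1) ∘ₗ sig σ n i = sig σ n (i+1) ∘ₗ sig σ n i ∘ₗ sig σ n (i+1) := by
  intro n
  induction n with
  | zero => intro i h1 h2; omega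
  | succ n ih =>
    intro i h1 h2
    match i, h1 with
    | 1, _ =>
      obtain ⟨m, rfl⟩ : ∃ m, n = m + 2 := ⟨n - 2, by omega⟩
      rw [sig_one', sig_two]
      exact G1 σ hσ
    | (i'+2), _ =>
      obtain ⟨m, rfl⟩ : ∃ m, n = m + 1 := ⟨n - 1, by omega⟩
      rw [sig_succ, show sig σ (m+2) (i'+3) = LinearMap.lTensor V (sig σ (m+1) (i'+2)) from rfl]
      have h := congrArg (LinearMap.lTensor (R:=R) V) (ih (i'+1) (by omega) (by omega))
      simp only [LinearMap.lTensor_comp] at h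
      exact h

/-- Far commutation for the lifted maps. -/
lemma farTP : ∀ (n i k : ℕ), 1 ≤ i → i + 2 ≤ k →
    sig σ n i ∘ₗ sig σ n k = sig σ n k ∘ₗ sig σ n i := by
  intro n
  induction n with
  | zero => intro i k h1 h2; rfl
  | succ n ih =>
    intro i k h1 h2
    match n with
    | 0 => rfl
    | (n'+1) =>
      match i, h1 with
      | 1, _ =>
        obtain ⟨k', rfl⟩ : ∃ k', k = k' + 3 := ⟨k - 3, by omega⟩
        match n' with
        | 0 =>
          -- sig σ 2 (k'+3) = lTensor V (sig σ 1 (k'+2)) = lTensor V id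
          rw [sig_succ, show sig σ 1 (k'+2) = LinearMap.id from rfl, LinearMap.lTensor_id]
          simp
          exact LinearMap.ext fun _ => rfl
        | (m+1) =>
          rw [sig_one, sig_succ,
            show sig σ (m+2) (k'+2) = LinearMap.lTensor V (sig σ (m+1) (k'+1)) from rfl]
          exact G2 σ (sig σ (m+1) (k'+1))
      | (i'+2), _ =>
        obtain ⟨k', rfl⟩ : ∃ k', k = k' + 2 := ⟨k - 2, by omega⟩
        rw [sig_succ, show sig σ (n'+2) (k'+2) = LinearMap.lTensor V (sig σ (n'+1) (k'+1)) from rfl]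
        have h := congrArg (LinearMap.lTensor (R:=R) V) (ih (i'+1) (k'+1) (by omega) (by omega))
        simp only [LinearMap.lTensor_comp] at h
        exact h

end TPlem

section TPlem2
variable (σ : V ⊗[R] V →ₗ[R] V ⊗[R] V) (ε : V →ₗ[R] R)

/-- `slide` commutes with higher `sig`s. -/
lemma slideSigTP (n : ℕ) : ∀ (i k : ℕ), i + 1 ≤ k →
    slide σ n i ∘ₗ sig σ n k = sig σ n k ∘ₗ slide σ n i
  | 0, k, _ => by
    rw [show slide σ n 0 = LinearMap.id from rfl]
    simp
  | 1, k, _ => by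
    rw [show slide σ n 1 = LinearMap.id from rfl]
    simp
  | (i+2), k, h => by
    have far := LinearMap.congr_fun (farTP σ n (i+1) k (by omega) (by omega))
    simp only [LinearMap.coe_comp, Function.comp_apply] at far
    have ih := LinearMap.congr_fun (slideSigTP n (i+1) k (by omega))
    simp only [LinearMap.coe_comp, Function.comp_apply] at ih
    refine LinearMap.ext fun x => ?_
    simp only [slide_succ, LinearMap.coe_comp, Function.comp_apply]
    rw [far, ih]

lemma epsSigTP (n k : ℕ) :
    eps1 ε (n+1) ∘ₗ sig σ (n+2) (k+2) = sig σ (n+1) (k+1) ∘ₗ eps1 ε (n+1) := by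
  rw [eps1_eq, sig_succ]
  exact Eg_lTensor (V := V) ε (sig σ (n+1) (k+1))

lemma epsEpsSigTP
    (hε : ((TensorProduct.lid R R).toLinearMap ∘ₗ TensorProduct.map ε ε) ∘ₗ σ =
          (TensorProduct.lid R R).toLinearMap ∘ₗ TensorProduct.map ε ε) (n : ℕ) :
    eps1 ε n ∘ₗ eps1 ε (n+1) ∘ₗ sig σ (n+2) 1 = eps1 ε n ∘ₗ eps1 ε (n+1) := by
  rw [eps1_eq, eps1_eq', sig_one]
  exact EgEg_S1 σ ε hε

/-- The key braid identity for the neighbour case. -/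
lemma L6TP (hσ : YangBaxter σ) : ∀ (m i : ℕ), 1 ≤ i → i ≤ m + 1 →
    LinearMap.lTensor V (slide σ (m+1) i) ∘ₗ slide σ (m+2) i ∘ₗ sig σ (m+2) i
      = sig σ (m+2) 1 ∘ₗ LinearMap.lTensor V (slide σ (m+1) i) ∘ₗ slide σ (m+2) i
  | m, 1, _, _ => by
    rw [show slide σ (m+1) 1 = LinearMap.id from rfl,
      show slide σ (m+2) 1 = LinearMap.id from rfl, LinearMap.lTensor_id]
    simp
    exact LinearMap.ext fun _ => rfl
  | m, (i'+2), _, hle => by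
    have hA : ∀ y : TP R V (m+2), LinearMap.lTensor V (slide σ (m+1) (i'+2)) y
        = LinearMap.lTensor V (slide σ (m+1) (i'+1)) (sig σ (m+2) (i'+2) y) := by
      intro y
      rw [show slide σ (m+1) (i'+2) = slide σ (m+1) (i'+1) ∘ₗ sig σ (m+1) (i'+1) from rfl,
        show sig σ (m+2) (i'+2) = LinearMap.lTensor V (sig σ (m+1) (i'+1)) from rfl]
      simp only [LinearMap.lTensor_comp, LinearMap.coe_comp, Function.comp_apply]
      rfl
    have slide_app : ∀ y : TP R V (m+2), slide σ (m+2) (i'+2) y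
        = slide σ (m+2) (i'+1) (sig σ (m+2) (i'+1) y) := by
      intro y
      rw [slide_succ]
      simp only [LinearMap.coe_comp, Function.comp_apply]
    have far_app : ∀ y : TP R V (m+2), slide σ (m+2) (i'+1) (sig σ (m+2) (i'+2) y)
        = sig σ (m+2) (i'+2) (slide σ (m+2) (i'+1) y) := by
      have h := LinearMap.congr_fun (slideSigTP σ (m+2) (i'+1) (i'+2) (by omega))
      simp only [LinearMap.coe_comp, Function.comp_apply] at h
      exact h
    have yb_app : ∀ y : TP R V (m+2),
        sig σ (m+2) (i'+1) (sig σ (m+2) (i'+2) (sig σ (m+2) (i'+1) y))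
        = sig σ (m+2) (i'+2) (sig σ (m+2) (i'+1) (sig σ (m+2) (i'+2) y)) := by
      have h := LinearMap.congr_fun (ybTP σ hσ (m+2) (i'+1) (by omega) (by omega))
      simp only [LinearMap.coe_comp, Function.comp_apply] at h
      exact h
    have ih : ∀ y : TP R V (m+2), LinearMap.lTensor V (slide σ (m+1) (i'+1))
          (slide σ (m+2) (i'+1) (sig σ (m+2) (i'+1) y))
        = sig σ (m+2) 1 (LinearMap.lTensor V (slide σ (m+1) (i'+1)) (slide σ (m+2) (i'+1) y)) := by
      have h := LinearMap.congr_fun (L6TP hσ m (i'+1) (by omega) (by omega))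
      simp only [LinearMap.coe_comp, Function.comp_apply] at h
      exact h
    refine LinearMap.ext fun x => ?_
    show LinearMap.lTensor V (slide σ (m+1) (i'+2)) (slide σ (m+2) (i'+2) (sig σ (m+2) (i'+2) x))
        = sig σ (m+2) 1 (LinearMap.lTensor V (slide σ (m+1) (i'+2)) (slide σ (m+2) (i'+2) x))
    simp only [hA, slide_app]
    rw [← far_app, ← yb_app, ih, far_app]

/-- The neighbour presimplicial identity. -/
lemma neighborTP (hσ : YangBaxter σ)
    (hε : ((TensorProduct.lid R R).toLinearMap ∘ₗ TensorProduct.map ε ε) ∘ₗ σ =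
          (TensorProduct.lid R R).toLinearMap ∘ₗ TensorProduct.map ε ε)
    (m i : ℕ) (h1 : 1 ≤ i) (h2 : i ≤ m + 1) :
    face σ ε m i ∘ₗ face σ ε (m+1) i ∘ₗ sig σ (m+2) i = face σ ε m i ∘ₗ face σ ε (m+1) i := by
  have swap : ∀ y : TP R V (m+2), slide σ (m+1) i (eps1 ε (m+1) y)
      = eps1 ε (m+1) (LinearMap.lTensor V (slide σ (m+1) i) y) := by
    intro y
    have h := LinearMap.congr_fun (Eg_lTensor (V := V) ε (slide σ (m+1) i)) y
    simp only [LinearMap.coe_comp, Function.comp_apply] at h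
    exact h.symm
  have l6 : ∀ y : TP R V (m+2), LinearMap.lTensor V (slide σ (m+1) i)
        (slide σ (m+2) i (sig σ (m+2) i y))
      = sig σ (m+2) 1 (LinearMap.lTensor V (slide σ (m+1) i) (slide σ (m+2) i y)) := by
    have h := LinearMap.congr_fun (L6TP σ hσ m i h1 h2)
    simp only [LinearMap.coe_comp, Function.comp_apply] at h
    exact h
  have n2 : ∀ y : TP R V (m+2), eps1 ε m (eps1 ε (m+1) (sig σ (m+2) 1 y))
      = eps1 ε m (eps1 ε (m+1) y) := by
    have h := LinearMap.congr_fun (epsEpsSigTP σ ε hε m)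
    simp only [LinearMap.coe_comp, Function.comp_apply] at h
    exact h
  refine LinearMap.ext fun x => ?_
  show eps1 ε m (slide σ (m+1) i (eps1 ε (m+1) (slide σ (m+2) i (sig σ (m+2) i x))))
      = eps1 ε m (slide σ (m+1) i (eps1 ε (m+1) (slide σ (m+2) i x)))
  rw [swap, swap, l6]
  exact n2 _

end TPlem2

section Main
variable (σ : V ⊗[R] V →ₗ[R] V ⊗[R] V) (ε : V →ₗ[R] R)

lemma face_app (n i : ℕ) (x : TP R V (n+2)) :
    face σ ε (n+1) (i+2) x = face σ ε (n+1) (i+1) (sig σ (n+2) (i+1) x) := by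
  rw [face_succ]
  simp only [LinearMap.coe_comp, Function.comp_apply]

lemma mainTP (hσ : YangBaxter σ)
    (hε : ((TensorProduct.lid R R).toLinearMap ∘ₗ TensorProduct.map ε ε) ∘ₗ σ =
          (TensorProduct.lid R R).toLinearMap ∘ₗ TensorProduct.map ε ε) :
    ∀ (m i j : ℕ), 1 ≤ i → i < j → j ≤ m + 2 →
      face σ ε m i ∘ₗ face σ ε (m+1) j = face σ ε m (j-1) ∘ₗ face σ ε (m+1) i := by
  intro m i j h1 h2 h3
  induction j, h2 using Nat.le_induction with
  | base =>
    -- j = i + 1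
    obtain ⟨i', rfl⟩ : ∃ i', i = i' + 1 := ⟨i - 1, by omega⟩
    show face σ ε m (i'+1) ∘ₗ face σ ε (m+1) (i'+2) = face σ ε m (i'+1) ∘ₗ face σ ε (m+1) (i'+1)
    rw [face_succ]
    rw [← LinearMap.comp_assoc]
    have h := neighborTP σ ε hσ hε m (i'+1) (by omega) (by omega)
    rw [← LinearMap.comp_assoc] at h
    exact h
  | succ j hj ihj =>
    obtain ⟨k', rfl⟩ : ∃ k', j = k' + 2 := ⟨j - 2, by omega⟩
    obtain ⟨m', rfl⟩ : ∃ m', m = m' + 1 := ⟨m - 1, by omega⟩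
    have ih := ihj (by omega)
    have ih' : ∀ y : TP R V (m'+3), face σ ε (m'+1) i (face σ ε (m'+2) (k'+2) y)
        = face σ ε  (m'+1) (k'+1) (face σ ε (m'+2) i y) := by
      have h := LinearMap.congr_fun ih
      simp only [LinearMap.coe_comp, Function.comp_apply] at h
      exact h
    have e1 : ∀ y : TP R V (m'+3), face σ ε (m'+2) i (sig σ (m'+3) (k'+2) y)
        = sig σ (m'+2) (k'+1) (face σ ε (m'+2) i y) := by
      have hs : ∀ y : TP R V (m'+3), slide σ (m'+3) i (sig σ (m'+3) (k'+2) y)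
          = sig σ (m'+3) (k'+2) (slide σ (m'+3) i y) := by
        have h := LinearMap.congr_fun (slideSigTP σ (m'+3) i (k'+2) (by omega))
        simp only [LinearMap.coe_comp, Function.comp_apply] at h
        exact h
      have he : ∀ y : TP R V (m'+3), eps1 ε (m'+2) (sig σ (m'+3) (k'+2) y)
          = sig σ (m'+2) (k'+1) (eps1 ε (m'+2) y) := by
        have h := LinearMap.congr_fun (epsSigTP σ ε (m'+1) k')
        simp only [LinearMap.coe_comp, Function.comp_apply] at h
        exact h
      intro y
      show eps1 ε (m'+2) (slide σ (m'+3) i (sig σ (m'+3) (k'+2) y))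
          = sig σ (m'+2) (k'+1) (eps1 ε (m'+2) (slide σ (m'+3) i y))
      rw [hs, he]
    refine LinearMap.ext fun x => ?_
    show face σ ε (m'+1) i (face σ ε (m'+2) (k'+3) x)
        = face σ ε  (m'+1) (k'+2) (face σ ε (m'+2) i x)
    rw [show face σ ε  (m'+1) (k'+2) (face σ ε (m'+2) i x)
        = face σ ε  (m'+1) (k'+1) (sig σ (m'+2) (k'+1) (face σ ε (m'+2) i x)) from
      face_app σ ε m' k' _ ]
    rw [show face σ ε (m'+2) (k'+3) x
        = face σ ε (m'+2) (k'+2) (sig σ (m'+3) (k'+2) x) from face_app σ ε  (m'+1) (k'+1) _]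
    rw [ih', e1]
end Main

/-- for a pre-braided vector space `(V, σ)` with a braided character `ε`,
the face maps `d_{n;i} = ε₁ ∘ (σ₁ ∘ ⋯ ∘ σ_{i−1})` satisfy the presimplicial identities
`d_{n−1;i} ∘ d_{n;j} = d_{n−1;j−1} ∘ d_{n;i}` for all `1 ≤ i < j ≤ n`. -/
theorem braided_face_maps_presimplicial
    (σ : V ⊗[R] V →ₗ[R] V ⊗[R] V) (hσ : YangBaxter σ)
    (ε : V →ₗ[R] R)
    (hε : ((TensorProduct.lid R R).toLinearMap ∘ₗ TensorProduct.map ε ε) ∘ₗ σ =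
          (TensorProduct.lid R R).toLinearMap ∘ₗ TensorProduct.map ε ε) :
    ∀ (m i j : ℕ), 1 ≤ i → i < j → j ≤ m + 2 →
      face σ ε m i ∘ₗ face σ ε (m+1) j = face σ ε m (j-1) ∘ₗ face σ ε (m+1) i := by
  exact mainTP σ ε hσ hε
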